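/- Let (N, D, θ) be a sandpile model in dimension d with complete neighborhood N, set r = max{|v|_∞ : v ∈ N}, and let c be a configuration lying within the elementary hypercube of side n with c(x) < 2θ for every cell x. Then the set of cells that topple at some time during the parallel evolution, i.e. {x ∈ ℤ^d : ∃ s ≥ 0, F^s(c)(x) ≥ θ}, has cardinality at most (8·d·θ·r·n^d)^d. -/

import Mathlib

/-- A sandpile model in dimension `d`: a finite nonempty neighborhood
`N ⊆ ℤ^d \ {0}` and a distribution `D` with `D v ≥ 1` for `v ∈ N`. -/
structure Sandpile (d : ℕ) where
  N : Finset (Fin d → ℤ)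
  D : (Fin d → ℤ) → ℕ
  N_nonempty : N.Nonempty
  zero_not_mem : (0 : Fin d → ℤ) ∉ N
  D_pos : ∀ v ∈ N, 1 ≤ D v

/-- The stability threshold `θ = Σ_{v ∈ N} D(v)`. -/
def Sandpile.θ {d : ℕ} (M : Sandpile d) : ℕ := ∑ v ∈ M.N, M.D v

/-- The Heaviside function: `H n = 1` if `n ≥ 0`, else `0`. -/
def Heaviside (n : ℤ) : ℕ := if 0 ≤ n then 1 else 0

/-- The parallel global rule `F`. -/
def Sandpile.F {d : ℕ} (M : Sandpile d) (c : (Fin d → ℤ) → ℕ) : (Fin d → ℤ) → ℕ :=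
  fun x => c x - M.θ * Heaviside ((c x : ℤ) - (M.θ : ℤ))
    + ∑ y ∈ M.N, M.D y * Heaviside ((c (x + y) : ℤ) - (M.θ : ℤ))

/-- A configuration is stable when every cell holds fewer than `θ` grains. -/
def Sandpile.Stable {d : ℕ} (M : Sandpile d) (c : (Fin d → ℤ) → ℕ) : Prop :=
  ∀ x, c x < M.θ

/-- A configuration is finite when its total number of grains is finite,
equivalently its support is finite. -/
def FiniteConfig {d : ℕ} (c : (Fin d → ℤ) → ℕ) : Prop :=
  (Function.support c).Finite

/-- Sequential toppling at an unstable cell `x`: remove `θ` grains from `x`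
and add `D(y−x)` grains to each `y ∈ x + N`, other cells unchanged. -/
def Sandpile.SeqStepAt {d : ℕ} (M : Sandpile d) (x : Fin d → ℤ)
    (c c' : (Fin d → ℤ) → ℕ) : Prop :=
  M.θ ≤ c x ∧
    ∀ y, c' y = (if y = x then c y - M.θ else c y)
      + (if y - x ∈ M.N then M.D (y - x) else 0)

/-- `c ⇀ c'`: a sequential toppling at some unstable cell. -/
def Sandpile.SeqStep {d : ℕ} (M : Sandpile d)
    (c c' : (Fin d → ℤ) → ℕ) : Prop :=
  ∃ x, M.SeqStepAt x c c'

/-- `c ⇀* c'`: reflexive–transitive closure of `⇀`. -/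
def Sandpile.SeqReach {d : ℕ} (M : Sandpile d)
    (c c' : (Fin d → ℤ) → ℕ) : Prop :=
  Relation.ReflTransGen M.SeqStep c c'

/-- The neighborhood is complete: every element of `ℤ^d` is a nonnegative
integer combination of elements of `N`. -/
def Sandpile.Complete {d : ℕ} (M : Sandpile d) : Prop :=
  ∀ z : Fin d → ℤ, ∃ a : (Fin d → ℤ) → ℕ, z = ∑ v ∈ M.N, (a v : ℤ) • v

/-- The configuration lies within the elementary hypercube of side `n`:
`c x = 0` for all `x ∉ {0,…,n−1}^d`. -/
def InCube {d : ℕ} (n : ℕ) (c : (Fin d → ℤ) → ℕ) : Prop :=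
  ∀ x : Fin d → ℤ, (¬ ∀ i, 0 ≤ x i ∧ x i < (n : ℤ)) → c x = 0

/-- Add one grain at cell `y` (i.e. `c + 1_y`). -/
def addGrain {d : ℕ} (c : (Fin d → ℤ) → ℕ) (y : Fin d → ℤ) : (Fin d → ℤ) → ℕ :=
  fun x => if x = y then c x + 1 else c x

/-- `r` is the maximal sup-norm of a neighborhood vector:
`r = max{|v|_∞ : v ∈ N}`. -/
def Sandpile.IsRadius {d : ℕ} (M : Sandpile d) (r : ℕ) : Prop :=
  (∀ v ∈ M.N, ∀ i, (v i).natAbs ≤ r) ∧ (∃ v ∈ M.N, ∃ i, (v i).natAbs = r)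

open Finset
namespace SandpileBound
variable {d : ℕ}

def uv (M : Sandpile d) (c : (Fin d → ℤ) → ℕ) (x : Fin d → ℤ) : ℕ :=
  if M.θ ≤ c x then 1 else 0
lemma uv_eq_one {M : Sandpile d} {c : (Fin d → ℤ) → ℕ} {x : Fin d → ℤ}
    (h : M.θ ≤ c x) : uv M c x = 1 := by simp [uv, h]
lemma uv_eq_zero {M : Sandpile d} {c : (Fin d → ℤ) → ℕ} {x : Fin d → ℤ}
    (h : c x < M.θ) : uv M c x = 0 := by simp [uv]; omega
lemma theta_pos (M : Sandpile d) : 1 ≤ M.θ := by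
  obtain ⟨v, hv⟩ := M.N_nonempty
  calc 1 ≤ M.D v := M.D_pos v hv
  _ ≤ M.θ := Finset.single_le_sum (fun i _ => Nat.zero_le _) hv
lemma heaviside_eq (M : Sandpile d) (c : (Fin d → ℤ) → ℕ) (x : Fin d → ℤ) :
    Heaviside ((c x : ℤ) - (M.θ : ℤ)) = uv M c x := by
  unfold Heaviside uv; congr 1; simp [Int.sub_nonneg, Nat.cast_le]
lemma F_apply (M : Sandpile d) (c : (Fin d → ℤ) → ℕ) (x : Fin d → ℤ) :
    M.F c x = (c x - M.θ * uv M c x) + ∑ y ∈ M.N, M.D y * uv M c (x + y) := by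
  unfold Sandpile.F; simp only [heaviside_eq]
lemma F_apply' (M : Sandpile d) (c : (Fin d → ℤ) → ℕ) (x : Fin d → ℤ) :
    M.F c x + M.θ * uv M c x = c x + ∑ y ∈ M.N, M.D y * uv M c (x + y) := by
  rw [F_apply]
  rcases le_or_gt M.θ (c x) with h | h
  · rw [uv_eq_one h]; omega
  · rw [uv_eq_zero h]; omega
noncomputable def box (r n t : ℕ) : Finset (Fin d → ℤ) :=
  Finset.Icc (fun _ => -((t : ℤ) * r)) (fun _ => (n : ℤ) - 1 + t * r)
lemma mem_box {r n t : ℕ} {x : Fin d → ℤ} :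
    x ∈ box (d := d) r n t ↔ ∀ i, -((t : ℤ) * r) ≤ x i ∧ x i ≤ (n : ℤ) - 1 + t * r := by
  simp [box, Finset.mem_Icc, Pi.le_def, forall_and]
lemma box_mono {r n t t' : ℕ} (h : t ≤ t') : box (d := d) r n t ⊆ box r n t' := by
  intro x hx
  rw [mem_box] at hx ⊢
  intro i
  have h1 : ((t : ℤ) * r) ≤ (t' : ℤ) * r := by
    have : (t : ℤ) ≤ t' := by exact_mod_cast h
    nlinarith [Int.ofNat_nonneg r]
  have := hx i
  constructor <;> linarith
lemma mem_box_sub {M : Sandpile d} {r n t : ℕ}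
    (hr1 : ∀ v ∈ M.N, ∀ i, (v i).natAbs ≤ r)
    {z y : Fin d → ℤ} (hz : z ∈ box r n t) (hy : y ∈ M.N) :
    z - y ∈ box r n (t + 1) := by
  rw [mem_box] at hz ⊢
  intro i
  have hb : |y i| ≤ (r : ℤ) := by
    rw [Int.abs_eq_natAbs]; exact_mod_cast hr1 y hy i
  have hb1 := abs_le.mp hb
  have := hz i
  have hsub : (z - y) i = z i - y i := rfl
  rw [hsub]; push_cast
  constructor <;> linarith [this.1, this.2]
lemma supp_box {M : Sandpile d} {r n : ℕ} {c : (Fin d → ℤ) → ℕ}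
    (hcube : InCube n c) (hr1 : ∀ v ∈ M.N, ∀ i, (v i).natAbs ≤ r) :
    ∀ t x, (M.F^[t] c) x ≠ 0 → x ∈ box r n t := by
  intro t
  induction t with
  | zero =>
    intro x hx
    simp only [Function.iterate_zero, id_eq] at hx
    by_contra hb
    rw [mem_box] at hb; push_neg at hb
    apply hx; apply hcube
    intro hall
    obtain ⟨i, hi⟩ := hb
    have := hall i
    push_cast at hi
    omega
  | succ t ih =>
    intro x hx
    rw [Function.iterate_succ_apply'] at hx
    rw [F_apply] at hx
    by_cases hs : ∑ y ∈ M.N, M.D y * uv M (M.F^[t] c) (x + y) = 0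
    · rw [hs, Nat.add_zero] at hx
      have hcx : (M.F^[t] c) x ≠ 0 := by
        intro h0; rw [h0] at hx; simp at hx
      exact box_mono (Nat.le_succ t) (ih x hcx)
    · obtain ⟨y, hy, hne⟩ := Finset.exists_ne_zero_of_sum_ne_zero hs
      have hθ : M.θ ≤ (M.F^[t] c) (x + y) := by
        by_contra hlt
        rw [uv_eq_zero (by omega), Nat.mul_zero] at hne
        exact hne rfl
      have hmem : x + y ∈ box r n t := by
        apply ih
        have := theta_pos M
        omega
      have := mem_box_sub hr1 hmem hy
      rwa [add_sub_cancel_right] at this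
lemma unstable_mem_box {M : Sandpile d} {r n : ℕ} {c : (Fin d → ℤ) → ℕ}
    (hcube : InCube n c) (hr1 : ∀ v ∈ M.N, ∀ i, (v i).natAbs ≤ r)
    {t : ℕ} {z : Fin d → ℤ} (hz : M.θ ≤ (M.F^[t] c) z) : z ∈ box r n t := by
  apply supp_box hcube hr1
  have := theta_pos M
  omega

/-! ### new in stage 3 -/

lemma sum_uv_shift {M : Sandpile d} {r n : ℕ} {c : (Fin d → ℤ) → ℕ}
    (hcube : InCube n c) (hr1 : ∀ v ∈ M.N, ∀ i, (v i).natAbs ≤ r)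
    {t : ℕ} {y : Fin d → ℤ} (hy : y ∈ M.N) :
    ∑ x ∈ box r n (t + 1), uv M (M.F^[t] c) (x + y)
      = ∑ x ∈ box r n (t + 1), uv M (M.F^[t] c) x := by
  set E : Finset (Fin d → ℤ) := box r n (t + 1) with hE
  set g : (Fin d → ℤ) → ℕ := uv M (M.F^[t] c) with hg
  have hinj : ∀ x ∈ E, ∀ x' ∈ E, x + y = x' + y → x = x' := by
    intro a _ b _ h
    exact add_right_cancel h
  have himg : ∑ z ∈ E.image (· + y), g z = ∑ x ∈ E, g (x + y) :=
    Finset.sum_image hinj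
  have hgz : ∀ z, g z ≠ 0 → M.θ ≤ (M.F^[t] c) z := by
    intro z hz
    by_contra hlt
    exact hz (uv_eq_zero (by omega))
  have h1 : ∑ x ∈ E, g x = ∑ x ∈ E ∪ E.image (· + y), g x := by
    apply Finset.sum_subset Finset.subset_union_left
    intro z _ hzE
    by_contra h0
    apply hzE
    have hzb : z ∈ box r n t := unstable_mem_box hcube hr1 (hgz z h0)
    exact box_mono (Nat.le_succ t) hzb
  have h2 : ∑ x ∈ E.image (· + y), g x = ∑ x ∈ E ∪ E.image (· + y), g x := by
    apply Finset.sum_subset Finset.subset_union_right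
    intro z _ hzI
    by_contra h0
    apply hzI
    have hzb : z ∈ box r n t := unstable_mem_box hcube hr1 (hgz z h0)
    have : z - y ∈ E := mem_box_sub hr1 hzb hy
    refine Finset.mem_image.mpr ⟨z - y, this, ?_⟩
    simp
  rw [← himg, h2, ← h1]

lemma mass_step {M : Sandpile d} {r n : ℕ} {c : (Fin d → ℤ) → ℕ}
    (hcube : InCube n c) (hr1 : ∀ v ∈ M.N, ∀ i, (v i).natAbs ≤ r) (t : ℕ) :
    ∑ x ∈ box r n (t + 1), (M.F^[t+1] c) x = ∑ x ∈ box r n t, (M.F^[t] c) x := by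
  set E : Finset (Fin d → ℤ) := box r n (t + 1) with hE
  set ct : (Fin d → ℤ) → ℕ := M.F^[t] c with hct
  have hiter : ∀ x, (M.F^[t+1] c) x = M.F ct x := by
    intro x; rw [Function.iterate_succ_apply']
  have hsumid : ∑ x ∈ E, (M.F ct x + M.θ * uv M ct x)
      = ∑ x ∈ E, (ct x + ∑ y ∈ M.N, M.D y * uv M ct (x + y)) :=
    Finset.sum_congr rfl (fun x _ => F_apply' M ct x)
  rw [Finset.sum_add_distrib, Finset.sum_add_distrib, ← Finset.mul_sum] at hsumid
  have hswap : ∑ x ∈ E, ∑ y ∈ M.N, M.D y * uv M ct (x + y)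
      = M.θ * ∑ x ∈ E, uv M ct x := by
    rw [Finset.sum_comm]
    have : ∀ y ∈ M.N, ∑ x ∈ E, M.D y * uv M ct (x + y)
        = M.D y * ∑ x ∈ E, uv M ct x := by
      intro y hy
      rw [← Finset.mul_sum]
      rw [sum_uv_shift hcube hr1 hy]
    rw [Finset.sum_congr rfl this, ← Finset.sum_mul]
    rfl
  rw [hswap] at hsumid
  have hcancel : ∑ x ∈ E, M.F ct x = ∑ x ∈ E, ct x := by omega
  have hsub : ∑ x ∈ E, ct x = ∑ x ∈ box r n t, ct x := by
    symm
    apply Finset.sum_subset (box_mono (Nat.le_succ t))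
    intro z _ hz
    by_contra h0
    exact hz (supp_box hcube hr1 t z h0)
  calc ∑ x ∈ E, (M.F^[t+1] c) x = ∑ x ∈ E, M.F ct x :=
        Finset.sum_congr rfl (fun x _ => hiter x)
  _ = ∑ x ∈ E, ct x := hcancel
  _ = ∑ x ∈ box r n t, ct x := hsub

lemma mass_const {M : Sandpile d} {r n : ℕ} {c : (Fin d → ℤ) → ℕ}
    (hcube : InCube n c) (hr1 : ∀ v ∈ M.N, ∀ i, (v i).natAbs ≤ r) (t : ℕ) :
    ∑ x ∈ box r n t, (M.F^[t] c) x = ∑ x ∈ box r n 0, c x := by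
  induction t with
  | zero => simp
  | succ t ih => rw [mass_step hcube hr1 t, ih]

/-! ### stage 4: slab invariant, window lemma, directions -/

noncomputable def slab (M : Sandpile d) (r n : ℕ) (c : (Fin d → ℤ) → ℕ)
    (q : (Fin d → ℤ) → Prop) [DecidablePred q] (t : ℕ) : ℕ :=
  ∑ x ∈ (box r n t).filter q, (M.F^[t] c) x

lemma slab_init {M : Sandpile d} {r n : ℕ} {c : (Fin d → ℤ) → ℕ}
    (hcube : InCube n c) (hr1 : ∀ v ∈ M.N, ∀ i, (v i).natAbs ≤ r)
    {q : (Fin d → ℤ) → Prop} [DecidablePred q] {t₀ : ℕ} {z : Fin d → ℤ}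
    (hq : q z) (hθ : M.θ ≤ (M.F^[t₀] c) z) : 1 ≤ slab M r n c q t₀ := by
  have hz : z ∈ (box r n t₀).filter q :=
    Finset.mem_filter.mpr ⟨unstable_mem_box hcube hr1 hθ, hq⟩
  calc 1 ≤ M.θ := theta_pos M
  _ ≤ (M.F^[t₀] c) z := hθ
  _ ≤ slab M r n c q t₀ := Finset.single_le_sum (fun i _ => Nat.zero_le _) hz

lemma slab_step {M : Sandpile d} {r n : ℕ} {c : (Fin d → ℤ) → ℕ}
    (hcube : InCube n c) (hr1 : ∀ v ∈ M.N, ∀ i, (v i).natAbs ≤ r)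
    {q : (Fin d → ℤ) → Prop} [DecidablePred q]
    (hsplit : ∀ z, q z → ∃ y ∈ M.N, q (z - y))
    {t : ℕ} (h : 1 ≤ slab M r n c q t) : 1 ≤ slab M r n c q (t + 1) := by
  by_cases hA : ∃ z, q z ∧ M.θ ≤ (M.F^[t] c) z
  · obtain ⟨z₀, hqz, hθz⟩ := hA
    obtain ⟨w, hw, hqw⟩ := hsplit z₀ hqz
    have hx₀ : z₀ - w ∈ (box r n (t + 1)).filter q :=
      Finset.mem_filter.mpr ⟨mem_box_sub hr1 (unstable_mem_box hcube hr1 hθz) hw, hqw⟩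
    have hval : 1 ≤ (M.F^[t+1] c) (z₀ - w) := by
      rw [Function.iterate_succ_apply', F_apply]
      have h1 : M.D w * uv M (M.F^[t] c) (z₀ - w + w) = M.D w := by
        rw [sub_add_cancel, uv_eq_one hθz, mul_one]
      have h2 : M.D w * uv M (M.F^[t] c) (z₀ - w + w)
          ≤ ∑ y ∈ M.N, M.D y * uv M (M.F^[t] c) (z₀ - w + y) :=
        Finset.single_le_sum (f := fun y => M.D y * uv M (M.F^[t] c) (z₀ - w + y))
          (fun i _ => Nat.zero_le _) hw
      have h3 := M.D_pos w hw
      rw [h1] at h2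
      omega
    calc 1 ≤ (M.F^[t+1] c) (z₀ - w) := hval
    _ ≤ slab M r n c q (t + 1) := Finset.single_le_sum (fun i _ => Nat.zero_le _) hx₀
  · push_neg at hA
    have hle : slab M r n c q t ≤ slab M r n c q (t + 1) := by
      calc slab M r n c q t
          ≤ ∑ x ∈ (box r n (t + 1)).filter q, (M.F^[t] c) x :=
            Finset.sum_le_sum_of_subset
              (Finset.filter_subset_filter q (box_mono (Nat.le_succ t)))
      _ ≤ ∑ x ∈ (box r n (t + 1)).filter q, (M.F^[t+1] c) x := by
            apply Finset.sum_le_sum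
            intro x hx
            rw [Function.iterate_succ_apply', F_apply]
            have h0 : uv M (M.F^[t] c) x = 0 :=
              uv_eq_zero (hA x (Finset.mem_filter.mp hx).2)
            rw [h0, Nat.mul_zero, Nat.sub_zero]
            exact Nat.le_add_right _ _
    omega

lemma slab_persist {M : Sandpile d} {r n : ℕ} {c : (Fin d → ℤ) → ℕ}
    (hcube : InCube n c) (hr1 : ∀ v ∈ M.N, ∀ i, (v i).natAbs ≤ r)
    {q : (Fin d → ℤ) → Prop} [DecidablePred q]
    (hsplit : ∀ z, q z → ∃ y ∈ M.N, q (z - y))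
    {t₀ : ℕ} (hact : ∃ z, q z ∧ M.θ ≤ (M.F^[t₀] c) z) :
    ∀ t, t₀ ≤ t → 1 ≤ slab M r n c q t := by
  intro t ht
  induction t, ht using Nat.le_induction with
  | base =>
    obtain ⟨z, hq, hθ⟩ := hact
    exact slab_init hcube hr1 hq hθ
  | succ t ht ih => exact slab_step hcube hr1 hsplit ih

lemma stepback {M : Sandpile d} {c : (Fin d → ℤ) → ℕ} {t : ℕ} {x : Fin d → ℤ}
    (h1 : M.θ ≤ (M.F^[t+1] c) x) (h0 : (M.F^[t] c) x < M.θ) :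
    ∃ y ∈ M.N, M.θ ≤ (M.F^[t] c) (x + y) := by
  rw [Function.iterate_succ_apply', F_apply] at h1
  rw [uv_eq_zero h0, Nat.mul_zero, Nat.sub_zero] at h1
  have hs : ∑ y ∈ M.N, M.D y * uv M (M.F^[t] c) (x + y) ≠ 0 := by omega
  obtain ⟨y, hy, hne⟩ := Finset.exists_ne_zero_of_sum_ne_zero hs
  refine ⟨y, hy, ?_⟩
  by_contra hlt
  rw [uv_eq_zero (by omega), Nat.mul_zero] at hne
  exact hne rfl

lemma window {M : Sandpile d} {r n : ℕ} {c : (Fin d → ℤ) → ℕ}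
    (φ : (Fin d → ℤ) → ℤ)
    (hφadd : ∀ a b, φ (a + b) = φ a + φ b)
    (hφr : ∀ y ∈ M.N, |φ y| ≤ (r : ℤ))
    (hφcube : ∀ x, c x ≠ 0 → φ x ≤ (n : ℤ) - 1)
    (m : ℤ) (hm : (n : ℤ) ≤ m)
    (hfar : ∃ s x, M.θ ≤ (M.F^[s] c) x ∧ m + r ≤ φ x) :
    ∃ s x, M.θ ≤ (M.F^[s] c) x ∧ m ≤ φ x ∧ φ x ≤ m + r - 1 := by
  classical
  set P : ℕ → Prop := fun s => ∃ x, M.θ ≤ (M.F^[s] c) x ∧ m + r ≤ φ x with hPdef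
  have hPex : ∃ s, P s := by
    obtain ⟨s, x, h1, h2⟩ := hfar
    exact ⟨s, x, h1, h2⟩
  obtain ⟨x₀, hx₀θ, hx₀φ⟩ := Nat.find_spec hPex
  rcases Nat.eq_zero_or_pos (Nat.find hPex) with h0 | hpos
  · exfalso
    rw [h0] at hx₀θ
    simp only [Function.iterate_zero, id_eq] at hx₀θ
    have hc0 : c x₀ ≠ 0 := by
      have := theta_pos M
      omega
    have := hφcube x₀ hc0
    have hr0 : (0 : ℤ) ≤ (r : ℤ) := Int.ofNat_nonneg r
    linarith
  · have hk : Nat.find hPex = (Nat.find hPex - 1) + 1 := by omega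
    set k := Nat.find hPex - 1 with hkdef
    rw [hk] at hx₀θ
    have hstable : (M.F^[k] c) x₀ < M.θ := by
      by_contra hge
      have hPk : P k := ⟨x₀, by omega, hx₀φ⟩
      exact Nat.find_min hPex (by omega) hPk
    obtain ⟨y, hy, hθy⟩ := stepback hx₀θ hstable
    have hbnd := abs_le.mp (hφr y hy)
    have hφxy : φ (x₀ + y) = φ x₀ + φ y := hφadd x₀ y
    by_cases hcase : φ (x₀ + y) ≤ m + r - 1
    · exact ⟨k, x₀ + y, hθy, by linarith [hbnd.1, hbnd.2], hcase⟩
    · exfalso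
      push_neg at hcase
      have hPk : P k := ⟨x₀ + y, hθy, by linarith⟩
      exact Nat.find_min hPex (by omega) hPk

lemma dir_neg {M : Sandpile d} (hcomp : M.Complete) (i : Fin d) :
    ∃ y ∈ M.N, y i < 0 := by
  obtain ⟨a, ha⟩ := hcomp (-(Pi.single i (1:ℤ)))
  by_contra hall
  push_neg at hall
  have happ := congrFun ha i
  simp only [Pi.neg_apply, Pi.single_eq_same, Finset.sum_apply, Pi.smul_apply,
    smul_eq_mul] at happ
  have hnn : (0 : ℤ) ≤ ∑ v ∈ M.N, (a v : ℤ) * v i :=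
    Finset.sum_nonneg (fun v hv => mul_nonneg (Int.ofNat_nonneg _) (hall v hv))
  linarith

lemma dir_pos {M : Sandpile d} (hcomp : M.Complete) (i : Fin d) :
    ∃ y ∈ M.N, 0 < y i := by
  obtain ⟨a, ha⟩ := hcomp (Pi.single i (1:ℤ))
  by_contra hall
  push_neg at hall
  have happ := congrFun ha i
  simp only [Pi.single_eq_same, Finset.sum_apply, Pi.smul_apply, smul_eq_mul] at happ
  have hnp : ∑ v ∈ M.N, (a v : ℤ) * v i ≤ 0 :=
    Finset.sum_nonpos (fun v hv =>
      mul_nonpos_of_nonneg_of_nonpos (Int.ofNat_nonneg _) (hall v hv))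
  linarith

lemma theta_two {M : Sandpile d} (hd : 1 ≤ d) (hcomp : M.Complete) : 2 ≤ M.θ := by
  have i : Fin d := ⟨0, hd⟩
  obtain ⟨yp, hyp, hyppos⟩ := dir_pos hcomp i
  obtain ⟨yn, hyn, hynneg⟩ := dir_neg hcomp i
  have hne : yp ≠ yn := by
    intro h
    rw [h] at hyppos
    omega
  have hsub : ({yp, yn} : Finset (Fin d → ℤ)) ⊆ M.N := by
    intro z hz
    rcases Finset.mem_insert.mp hz with h | h
    · rwa [h]
    · rw [Finset.mem_singleton.mp h]; exact hyn
  have hsum : M.D yp + M.D yn ≤ M.θ := by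
    calc M.D yp + M.D yn = ∑ v ∈ ({yp, yn} : Finset (Fin d → ℤ)), M.D v :=
      (Finset.sum_pair hne).symm
    _ ≤ M.θ := Finset.sum_le_sum_of_subset hsub
  have h1 := M.D_pos yp hyp
  have h2 := M.D_pos yn hyn
  omega

/-! ### stage 5: counting activated slabs -/

lemma mass_lower_of_active {M : Sandpile d} {r n : ℕ} {c : (Fin d → ℤ) → ℕ}
    (hcube : InCube n c) (hr1 : ∀ v ∈ M.N, ∀ i, (v i).natAbs ≤ r)
    {ι : Type} [DecidableEq ι]
    (I : Finset ι) (cond : ι → (Fin d → ℤ) → Prop) [∀ a, DecidablePred (cond a)]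
    (hsplit : ∀ a ∈ I, ∀ z, cond a z → ∃ y ∈ M.N, cond a (z - y))
    (hact : ∀ a ∈ I, ∃ t z, cond a z ∧ M.θ ≤ (M.F^[t] c) z)
    (hexcl : ∀ a ∈ I, ∀ b ∈ I, a ≠ b → ∀ z, cond a z → cond b z → False) :
    I.card ≤ ∑ x ∈ box r n 0, c x := by
  classical
  choose tf zf hz hθ using hact
  set T : ℕ := I.attach.sup (fun a => tf a.1 a.2) with hT
  have hslab : ∀ a ∈ I, 1 ≤ slab M r n c (cond a) T := by
    intro a ha
    refine slab_persist hcube hr1 (hsplit a ha) ⟨zf a ha, hz a ha, hθ a ha⟩ T ?_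
    exact Finset.le_sup (f := fun a : {x // x ∈ I} => tf a.1 a.2)
      (Finset.mem_attach I ⟨a, ha⟩)
  have hdisj : (I : Set ι).PairwiseDisjoint
      (fun a => (box r n T).filter (cond a)) := by
    intro a ha b hb hab
    simp only [Function.onFun]
    refine Finset.disjoint_left.mpr ?_
    intro x hxa hxb
    exact hexcl a ha b hb hab x (Finset.mem_filter.mp hxa).2 (Finset.mem_filter.mp hxb).2
  calc I.card = ∑ _a ∈ I, 1 := by simp
  _ ≤ ∑ a ∈ I, slab M r n c (cond a) T := Finset.sum_le_sum hslab
  _ = ∑ x ∈ I.biUnion (fun a => (box r n T).filter (cond a)), (M.F^[T] c) x :=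
      (Finset.sum_biUnion hdisj).symm
  _ ≤ ∑ x ∈ box r n T, (M.F^[T] c) x := by
      apply Finset.sum_le_sum_of_subset
      exact Finset.biUnion_subset.mpr (fun a _ => Finset.filter_subset _ _)
  _ = ∑ x ∈ box r n 0, c x := by
      have := mass_const hcube hr1 T
      simpa using this

/-- signed coordinate value -/
def vsgn (i : Fin d) (e : Bool) (z : Fin d → ℤ) : ℤ := if e then z i else -(z i)

lemma vsgn_add (i : Fin d) (e : Bool) (a b : Fin d → ℤ) :
    vsgn i e (a + b) = vsgn i e a + vsgn i e b := by
  cases e <;> simp [vsgn] <;> ring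

lemma vsgn_sub (i : Fin d) (e : Bool) (a b : Fin d → ℤ) :
    vsgn i e (a - b) = vsgn i e a - vsgn i e b := by
  cases e <;> simp [vsgn] <;> ring

lemma vsgn_abs {M : Sandpile d} {r : ℕ} (hr1 : ∀ v ∈ M.N, ∀ i, (v i).natAbs ≤ r)
    {y : Fin d → ℤ} (hy : y ∈ M.N) (i : Fin d) (e : Bool) :
    |vsgn i e y| ≤ (r : ℤ) := by
  have habs : |y i| ≤ (r : ℤ) := by
    rw [Int.abs_eq_natAbs]
    exact_mod_cast hr1 y hy i
  cases e <;> simp [vsgn, abs_neg] <;> exact habs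

lemma vsgn_neg_exists {M : Sandpile d} (hcomp : M.Complete) (i : Fin d) (e : Bool) :
    ∃ y ∈ M.N, vsgn i e y ≤ -1 := by
  cases e
  · obtain ⟨y, hy, hpos⟩ := dir_pos hcomp i
    exact ⟨y, hy, by simp [vsgn]; omega⟩
  · obtain ⟨y, hy, hneg⟩ := dir_neg hcomp i
    exact ⟨y, hy, by simp [vsgn]; omega⟩

lemma vsgn_pos_exists {M : Sandpile d} (hcomp : M.Complete) (i : Fin d) (e : Bool) :
    ∃ y ∈ M.N, 1 ≤ vsgn i e y := by
  cases e
  · obtain ⟨y, hy, hneg⟩ := dir_neg hcomp i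
    exact ⟨y, hy, by simp [vsgn]; omega⟩
  · obtain ⟨y, hy, hpos⟩ := dir_pos hcomp i
    exact ⟨y, hy, by simp [vsgn]; omega⟩

/-- block condition: the signed coordinate lies in the `j`-th block beyond the cube -/
def bcond (r n : ℕ) (i : Fin d) (e : Bool) (j : ℕ) (z : Fin d → ℤ) : Prop :=
  (n : ℤ) + j * (2 * r + 1) ≤ vsgn i e z ∧
    vsgn i e z ≤ (n : ℤ) + j * (2 * r + 1) + (2 * r - 1)

instance bcond_dec (r n : ℕ) (i : Fin d) (e : Bool) (j : ℕ) :
    DecidablePred (bcond (d := d) r n i e j) := fun z => by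
  unfold bcond
  infer_instance

lemma bcond_split {M : Sandpile d} {r n : ℕ}
    (hr1 : ∀ v ∈ M.N, ∀ i, (v i).natAbs ≤ r) (hcomp : M.Complete)
    (i : Fin d) (e : Bool) (j : ℕ) :
    ∀ z, bcond r n i e j z → ∃ y ∈ M.N, bcond r n i e j (z - y) := by
  intro z hz
  obtain ⟨hz1, hz2⟩ := hz
  by_cases hhalf : vsgn i e z ≤ (n : ℤ) + j * (2 * r + 1) + (r - 1)
  · obtain ⟨y, hy, hyneg⟩ := vsgn_neg_exists hcomp i e
    have habs := abs_le.mp (vsgn_abs hr1 hy i e)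
    refine ⟨y, hy, ?_, ?_⟩ <;> rw [vsgn_sub]
    · linarith [habs.1, habs.2]
    · linarith [habs.1, habs.2]
  · push_neg at hhalf
    obtain ⟨y, hy, hypos⟩ := vsgn_pos_exists hcomp i e
    have habs := abs_le.mp (vsgn_abs hr1 hy i e)
    refine ⟨y, hy, ?_, ?_⟩ <;> rw [vsgn_sub]
    · linarith [habs.1, habs.2]
    · linarith [habs.1, habs.2]

/-- existence of a far toppled cell activates the `j`-th block -/
lemma block_active {M : Sandpile d} {r n : ℕ} {c : (Fin d → ℤ) → ℕ}
    (hcube : InCube n c) (hr1 : ∀ v ∈ M.N, ∀ i, (v i).natAbs ≤ r)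
    (hn : 1 ≤ n) (i : Fin d) (e : Bool) (j : ℕ)
    (hfar : ∃ s x, M.θ ≤ (M.F^[s] c) x ∧
      (n : ℤ) + j * (2 * r + 1) + r ≤ vsgn i e x) :
    ∃ t z, bcond r n i e j z ∧ M.θ ≤ (M.F^[t] c) z := by
  have hw := window (M := M) (r := r) (n := n) (c := c) (vsgn i e)
    (vsgn_add i e) (fun y hy => vsgn_abs hr1 hy i e)
    (fun x hx => ?_) ((n : ℤ) + j * (2 * r + 1)) ?_ hfar
  · obtain ⟨s, x, hθ, h1, h2⟩ := hw
    refine ⟨s, x, ⟨h1, ?_⟩, hθ⟩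
    have hr0 : (0 : ℤ) ≤ (r : ℤ) := Int.ofNat_nonneg r
    linarith
  · -- cells of the cube have vsgn ≤ n - 1
    have hx' : ∀ i', 0 ≤ x i' ∧ x i' < (n : ℤ) := by
      by_contra hcon
      exact hx (hcube x hcon)
    have hxi := hx' i
    have hn' : (1 : ℤ) ≤ (n : ℤ) := by exact_mod_cast hn
    cases e
    · have hv : vsgn i false x = -(x i) := by simp [vsgn]
      rw [hv]
      linarith [hxi.1]
    · have hv : vsgn i true x = x i := by simp [vsgn]
      rw [hv]
      linarith [hxi.2]
  · have : (0 : ℤ) ≤ (j : ℤ) * (2 * r + 1) := by positivity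
    linarith

lemma bcond_excl {r n : ℕ} (hn : 1 ≤ n) (i : Fin d) :
    ∀ (e : Bool) (j : ℕ), ∀ (e' : Bool) (j' : ℕ), (e, j) ≠ (e', j') →
      ∀ z : Fin d → ℤ, bcond r n i e j z → bcond r n i e' j' z → False := by
  have key : ∀ (e : Bool) (j j' : ℕ), j < j' → ∀ z : Fin d → ℤ,
      bcond r n i e j z → bcond (d := d) r n i e j' z → False := by
    intro e j j' hlt z ⟨_, h2⟩ ⟨h3, _⟩
    have hmul : ((j : ℤ) + 1) * (2 * r + 1) ≤ (j' : ℤ) * (2 * r + 1) := by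
      have hj : (j : ℤ) + 1 ≤ (j' : ℤ) := by exact_mod_cast hlt
      have hpos : (0 : ℤ) ≤ 2 * r + 1 := by positivity
      exact mul_le_mul_of_nonneg_right hj hpos
    nlinarith
  intro e j e' j' hne z hb hb'
  by_cases hee : e = e'
  · subst hee
    have hjj : j ≠ j' := by
      intro h
      exact hne (by rw [h])
    rcases Nat.lt_or_ge j j' with h | h
    · exact key e j j' h z hb hb'
    · have : j' < j := by omega
      exact key e j' j this z hb' hb
  · -- opposite signs: both x i ≥ n and -(x i) ≥ n, impossible since n ≥ 1
    have h1 := hb.1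
    have h2 := hb'.1
    have hv : vsgn i e z = - vsgn i e' z := by
      cases e <;> cases e' <;> simp_all [vsgn]
    have hn' : (1 : ℤ) ≤ (n : ℤ) := by exact_mod_cast hn
    have hj1 : (0 : ℤ) ≤ (j : ℤ) * (2 * r + 1) := by positivity
    have hj2 : (0 : ℤ) ≤ (j' : ℤ) * (2 * r + 1) := by positivity
    linarith

/-- far toppled cells on both sides of coordinate `i` bound the mass from below -/
lemma count_two {M : Sandpile d} {r n : ℕ} {c : (Fin d → ℤ) → ℕ}
    (hcube : InCube n c) (hr1 : ∀ v ∈ M.N, ∀ i, (v i).natAbs ≤ r)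
    (hcomp : M.Complete) (hn : 1 ≤ n) (i : Fin d) (P Q : ℕ)
    (hfarP : ∃ s x, M.θ ≤ (M.F^[s] c) x ∧
      (n : ℤ) + P * (2 * r + 1) + r ≤ vsgn i true x)
    (hfarQ : ∃ s x, M.θ ≤ (M.F^[s] c) x ∧
      (n : ℤ) + Q * (2 * r + 1) + r ≤ vsgn i false x) :
    P + 1 + (Q + 1) ≤ ∑ x ∈ box r n 0, c x := by
  classical
  set I : Finset (Bool × ℕ) :=
    ({true} ×ˢ Finset.range (P + 1)) ∪ ({false} ×ˢ Finset.range (Q + 1)) with hI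
  have hmem : ∀ a : Bool × ℕ, a ∈ I ↔
      (a.1 = true ∧ a.2 < P + 1) ∨ (a.1 = false ∧ a.2 < Q + 1) := by
    intro a
    rw [hI, Finset.mem_union, Finset.mem_product, Finset.mem_product,
      Finset.mem_singleton, Finset.mem_singleton, Finset.mem_range, Finset.mem_range]
  have hfar' : ∀ a ∈ I, ∃ s x, M.θ ≤ (M.F^[s] c) x ∧
      (n : ℤ) + a.2 * (2 * r + 1) + r ≤ vsgn i a.1 x := by
    intro a ha
    rcases (hmem a).mp ha with ⟨he, hj⟩ | ⟨he, hj⟩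
    · obtain ⟨s, x, h1, h2⟩ := hfarP
      refine ⟨s, x, h1, ?_⟩
      rw [he]
      have : (a.2 : ℤ) * (2 * r + 1) ≤ (P : ℤ) * (2 * r + 1) := by
        have : (a.2 : ℤ) ≤ P := by exact_mod_cast Nat.lt_succ_iff.mp hj
        have hpos : (0 : ℤ) ≤ 2 * r + 1 := by positivity
        exact mul_le_mul_of_nonneg_right this hpos
      linarith
    · obtain ⟨s, x, h1, h2⟩ := hfarQ
      refine ⟨s, x, h1, ?_⟩
      rw [he]
      have : (a.2 : ℤ) * (2 * r + 1) ≤ (Q : ℤ) * (2 * r + 1) := by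
        have : (a.2 : ℤ) ≤ Q := by exact_mod_cast Nat.lt_succ_iff.mp hj
        have hpos : (0 : ℤ) ≤ 2 * r + 1 := by positivity
        exact mul_le_mul_of_nonneg_right this hpos
      linarith
  have hcard : I.card = P + 1 + (Q + 1) := by
    rw [hI, Finset.card_union_of_disjoint]
    · simp
    · refine Finset.disjoint_left.mpr ?_
      intro a ha hb
      rw [Finset.mem_product] at ha hb
      simp at ha hb
      rw [ha.1] at hb
      exact absurd hb.1 (by simp)
  rw [← hcard]
  refine mass_lower_of_active hcube hr1 I (fun a => bcond r n i a.1 a.2) ?_ ?_ ?_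
  · intro a _ z hz
    exact bcond_split hr1 hcomp i a.1 a.2 z hz
  · intro a ha
    exact block_active hcube hr1 hn i a.1 a.2 (hfar' a ha)
  · intro a _ b _ hab z hza hzb
    exact bcond_excl hn i a.1 a.2 b.1 b.2 (by
      intro h
      apply hab
      exact Prod.ext (congrArg Prod.fst h) (congrArg Prod.snd h)) z hza hzb

/-- one-sided version -/
lemma count_one {M : Sandpile d} {r n : ℕ} {c : (Fin d → ℤ) → ℕ}
    (hcube : InCube n c) (hr1 : ∀ v ∈ M.N, ∀ i, (v i).natAbs ≤ r)
    (hcomp : M.Complete) (hn : 1 ≤ n) (i : Fin d) (e : Bool) (P : ℕ)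
    (hfarP : ∃ s x, M.θ ≤ (M.F^[s] c) x ∧
      (n : ℤ) + P * (2 * r + 1) + r ≤ vsgn i e x) :
    P + 1 ≤ ∑ x ∈ box r n 0, c x := by
  classical
  set I : Finset (Bool × ℕ) := {e} ×ˢ Finset.range (P + 1) with hI
  have hcard : I.card = P + 1 := by simp [hI]
  rw [← hcard]
  refine mass_lower_of_active hcube hr1 I (fun a => bcond r n i a.1 a.2) ?_ ?_ ?_
  · intro a _ z hz
    exact bcond_split hr1 hcomp i a.1 a.2 z hz
  · intro a ha
    rw [hI, Finset.mem_product, Finset.mem_singleton, Finset.mem_range] at ha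
    apply block_active hcube hr1 hn i a.1 a.2
    obtain ⟨s, x, h1, h2⟩ := hfarP
    refine ⟨s, x, h1, ?_⟩
    rw [ha.1]
    have : (a.2 : ℤ) * (2 * r + 1) ≤ (P : ℤ) * (2 * r + 1) := by
      have : (a.2 : ℤ) ≤ P := by exact_mod_cast Nat.lt_succ_iff.mp ha.2
      have hpos : (0 : ℤ) ≤ 2 * r + 1 := by positivity
      exact mul_le_mul_of_nonneg_right this hpos
    linarith
  · intro a _ b _ hab z hza hzb
    exact bcond_excl hn i a.1 a.2 b.1 b.2 (by
      intro h
      apply hab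
      exact Prod.ext (congrArg Prod.fst h) (congrArg Prod.snd h)) z hza hzb

/-! ### stage 6: final assembly -/

lemma exists_initial {M : Sandpile d} {c : (Fin d → ℤ) → ℕ}
    (hex : ∃ s x, M.θ ≤ (M.F^[s] c) x) : ∃ x, M.θ ≤ c x := by
  classical
  set P : ℕ → Prop := fun s => ∃ x, M.θ ≤ (M.F^[s] c) x with hP
  have hPex : ∃ s, P s := by
    obtain ⟨s, x, h⟩ := hex
    exact ⟨s, x, h⟩
  obtain ⟨x₀, hx₀⟩ := Nat.find_spec hPex
  rcases Nat.eq_zero_or_pos (Nat.find hPex) with h0 | hpos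
  · rw [h0] at hx₀
    simpa using ⟨x₀, hx₀⟩
  · exfalso
    have hk : Nat.find hPex = (Nat.find hPex - 1) + 1 := by omega
    set k := Nat.find hPex - 1 with hkdef
    rw [hk] at hx₀
    have hstable : (M.F^[k] c) x₀ < M.θ := by
      by_contra hge
      push_neg at hge
      exact Nat.find_min hPex (show k < Nat.find hPex by omega) ⟨x₀, hge⟩
    obtain ⟨y, _, hθy⟩ := stepback hx₀ hstable
    exact Nat.find_min hPex (show k < Nat.find hPex by omega) ⟨x₀ + y, hθy⟩

lemma n_pos {M : Sandpile d} {n : ℕ} {c : (Fin d → ℤ) → ℕ} (hd : 1 ≤ d)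
    (hcube : InCube n c) (hex : ∃ s x, M.θ ≤ (M.F^[s] c) x) : 1 ≤ n := by
  obtain ⟨x, hx⟩ := exists_initial hex
  by_contra h0
  have hn0 : n = 0 := by omega
  have : c x = 0 := by
    apply hcube
    intro hall
    have := hall ⟨0, hd⟩
    rw [hn0] at this
    push_cast at this
    omega
  have := theta_pos M
  omega

lemma r_pos {M : Sandpile d} {r : ℕ} (hr : M.IsRadius r) : 1 ≤ r := by
  obtain ⟨v, hv, i, _⟩ := hr.2
  by_contra h0
  have hr0 : r = 0 := by omega
  have hvz : v = 0 := by
    funext i'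
    have := hr.1 v hv i'
    rw [hr0] at this
    have : (v i').natAbs = 0 := by omega
    exact Int.natAbs_eq_zero.mp this
  exact M.zero_not_mem (hvz ▸ hv)

lemma box_zero_card {r n : ℕ} : (box (d := d) r n 0).card = n ^ d := by
  unfold box
  rw [Pi.card_Icc]
  have hcard : ∀ i : Fin d,
      (Finset.Icc (-(((0:ℕ) : ℤ) * r)) ((n : ℤ) - 1 + ((0:ℕ) : ℤ) * r)).card = n := by
    intro i
    rw [Int.card_Icc]
    push_cast
    omega
  calc (∏ i : Fin d, (Finset.Icc (-(((0:ℕ):ℤ) * r)) ((n:ℤ) - 1 + ((0:ℕ):ℤ) * r)).card)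
      = ∏ _i : Fin d, n := Finset.prod_congr rfl (fun i _ => hcard i)
  _ = n ^ d := by rw [Finset.prod_const, Finset.card_univ, Fintype.card_fin]

lemma G_le {M : Sandpile d} {r n : ℕ} {c : (Fin d → ℤ) → ℕ}
    (hbound : ∀ x, c x < 2 * M.θ) :
    ∑ x ∈ box r n 0, c x ≤ (2 * M.θ - 1) * n ^ d := by
  calc ∑ x ∈ box r n 0, c x ≤ ∑ _x ∈ box (d := d) r n 0, (2 * M.θ - 1) :=
        Finset.sum_le_sum (fun x _ => by have := hbound x; omega)
  _ = (box (d := d) r n 0).card * (2 * M.θ - 1) := by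
        rw [Finset.sum_const, smul_eq_mul]
  _ = (2 * M.θ - 1) * n ^ d := by rw [box_zero_card, Nat.mul_comm]

lemma pair_bound {M : Sandpile d} {r n : ℕ} {c : (Fin d → ℤ) → ℕ}
    (hcube : InCube n c) (hr1 : ∀ v ∈ M.N, ∀ i, (v i).natAbs ≤ r)
    (hcomp : M.Complete) (hn : 1 ≤ n) (i : Fin d)
    {x x' : Fin d → ℤ}
    (hx : ∃ s, M.θ ≤ (M.F^[s] c) x) (hx' : ∃ s, M.θ ≤ (M.F^[s] c) x') :
    x i - x' i ≤ 2 * (n : ℤ) + 2 * r - 2 + (∑ z ∈ box r n 0, c z) * (2 * r + 1) := by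
  classical
  set G : ℕ := ∑ z ∈ box r n 0, c z with hG
  set b : ℤ := 2 * (r : ℤ) + 1 with hb
  have hbpos : (0 : ℤ) < b := by positivity
  set A : ℤ := x i - ((n : ℤ) + r) with hA
  set A' : ℤ := -(x' i) - ((n : ℤ) + r) with hA'
  obtain ⟨s, hs⟩ := hx
  obtain ⟨s', hs'⟩ := hx'
  have hvx : vsgn i true x = x i := by simp [vsgn]
  have hvx' : vsgn i false x' = -(x' i) := by simp [vsgn]
  have hx1 : x i = A + ((n : ℤ) + r) := by rw [hA]; ring
  have hx2 : -(x' i) = A' + ((n : ℤ) + r) := by rw [hA']; ring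
  have hGb : (0 : ℤ) ≤ (G : ℤ) * b :=
    mul_nonneg (Int.ofNat_nonneg G) (le_of_lt hbpos)
  have hGbe : (G : ℤ) * b = (G : ℤ) * (2 * (r : ℤ) + 1) := by rw [hb]
  by_cases hA0 : 0 ≤ A <;> by_cases hA'0 : 0 ≤ A'
  · -- both sides far
    set P : ℕ := (A / b).toNat with hP
    set Q : ℕ := (A' / b).toNat with hQ
    have hPc : (P : ℤ) = A / b := Int.toNat_of_nonneg (Int.ediv_nonneg hA0 (le_of_lt hbpos))
    have hQc : (Q : ℤ) = A' / b := Int.toNat_of_nonneg (Int.ediv_nonneg hA'0 (le_of_lt hbpos))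
    have hmodA := Int.emod_def A b
    have hmodA' := Int.emod_def A' b
    have hmA1 := Int.emod_nonneg A (ne_of_gt hbpos)
    have hmA2 := Int.emod_lt_of_pos A hbpos
    have hmA'1 := Int.emod_nonneg A' (ne_of_gt hbpos)
    have hmA'2 := Int.emod_lt_of_pos A' hbpos
    have hP1 : (P : ℤ) * b ≤ A := by
      rw [hPc, mul_comm]
      linarith
    have hP2 : A ≤ ((P : ℤ) + 1) * b - 1 := by
      rw [hPc]
      have hexp : ((A / b) + 1) * b = b * (A / b) + b := by ring
      rw [hexp]
      have : A < b * (A / b) + b := by linarith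
      omega
    have hQ1 : (Q : ℤ) * b ≤ A' := by
      rw [hQc, mul_comm]
      linarith
    have hQ2 : A' ≤ ((Q : ℤ) + 1) * b - 1 := by
      rw [hQc]
      have hexp : ((A' / b) + 1) * b = b * (A' / b) + b := by ring
      rw [hexp]
      have : A' < b * (A' / b) + b := by linarith
      omega
    have hPb : (P : ℤ) * (2 * (r : ℤ) + 1) ≤ A := by rw [← hb]; exact hP1
    have hQb : (Q : ℤ) * (2 * (r : ℤ) + 1) ≤ A' := by rw [← hb]; exact hQ1
    have hcount := count_two hcube hr1 hcomp hn i P Q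
      ⟨s, x, hs, by rw [hvx]; push_cast; linarith⟩
      ⟨s', x', hs', by rw [hvx']; push_cast; linarith⟩
    have hcount' : ((P : ℤ) + 1) + ((Q : ℤ) + 1) ≤ (G : ℤ) := by exact_mod_cast hcount
    have hmul : (((P : ℤ) + 1) + ((Q : ℤ) + 1)) * b ≤ (G : ℤ) * b :=
      mul_le_mul_of_nonneg_right hcount' (le_of_lt hbpos)
    have hexp2 : (((P : ℤ) + 1) + ((Q : ℤ) + 1)) * b
        = ((P : ℤ) + 1) * b + ((Q : ℤ) + 1) * b := by ring
    rw [hexp2] at hmul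
    have hbval : b = 2 * (r : ℤ) + 1 := hb
    linarith
  · -- x far, x' near
    set P : ℕ := (A / b).toNat with hP
    have hPc : (P : ℤ) = A / b := Int.toNat_of_nonneg (Int.ediv_nonneg hA0 (le_of_lt hbpos))
    have hmodA := Int.emod_def A b
    have hmA1 := Int.emod_nonneg A (ne_of_gt hbpos)
    have hmA2 := Int.emod_lt_of_pos A hbpos
    have hP1 : (P : ℤ) * b ≤ A := by
      rw [hPc, mul_comm]
      linarith
    have hP2 : A ≤ ((P : ℤ) + 1) * b - 1 := by
      rw [hPc]
      have hexp : ((A / b) + 1) * b = b * (A / b) + b := by ring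
      rw [hexp]
      have : A < b * (A / b) + b := by linarith
      omega
    have hPb : (P : ℤ) * (2 * (r : ℤ) + 1) ≤ A := by rw [← hb]; exact hP1
    have hcount := count_one hcube hr1 hcomp hn i true P
      ⟨s, x, hs, by rw [hvx]; push_cast; linarith⟩
    have hcount' : (P : ℤ) + 1 ≤ (G : ℤ) := by exact_mod_cast hcount
    have hmul : ((P : ℤ) + 1) * b ≤ (G : ℤ) * b :=
      mul_le_mul_of_nonneg_right hcount' (le_of_lt hbpos)
    push_neg at hA'0
    have hA'1 : A' ≤ -1 := by omega
    linarith
  · -- x near, x' far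
    set Q : ℕ := (A' / b).toNat with hQ
    have hQc : (Q : ℤ) = A' / b := Int.toNat_of_nonneg (Int.ediv_nonneg hA'0 (le_of_lt hbpos))
    have hmodA' := Int.emod_def A' b
    have hmA'1 := Int.emod_nonneg A' (ne_of_gt hbpos)
    have hmA'2 := Int.emod_lt_of_pos A' hbpos
    have hQ1 : (Q : ℤ) * b ≤ A' := by
      rw [hQc, mul_comm]
      linarith
    have hQ2 : A' ≤ ((Q : ℤ) + 1) * b - 1 := by
      rw [hQc]
      have hexp : ((A' / b) + 1) * b = b * (A' / b) + b := by ring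
      rw [hexp]
      have : A' < b * (A' / b) + b := by linarith
      omega
    have hQb : (Q : ℤ) * (2 * (r : ℤ) + 1) ≤ A' := by rw [← hb]; exact hQ1
    have hcount := count_one hcube hr1 hcomp hn i false Q
      ⟨s', x', hs', by rw [hvx']; push_cast; linarith⟩
    have hcount' : (Q : ℤ) + 1 ≤ (G : ℤ) := by exact_mod_cast hcount
    have hmul : ((Q : ℤ) + 1) * b ≤ (G : ℤ) * b :=
      mul_le_mul_of_nonneg_right hcount' (le_of_lt hbpos)
    push_neg at hA0
    have hA1 : A ≤ -1 := by omega
    linarith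
  · push_neg at hA0 hA'0
    have hA1 : A ≤ -1 := by omega
    have hA'1 : A' ≤ -1 := by omega
    linarith

lemma W_bound_int (TH R NN Dd mm G : ℤ) (hθ2 : 2 ≤ TH) (hrr : 1 ≤ R)
    (hn : 1 ≤ NN) (hd : 1 ≤ Dd) (hm1 : NN ≤ mm) (hm2 : 1 ≤ mm)
    (hG : G + mm ≤ 2 * TH * mm) (hG0 : 0 ≤ G) :
    2 * NN + 2 * R + G * (2 * R + 1) ≤ 8 * Dd * TH * R * mm := by
  have hmm0 : (0 : ℤ) ≤ mm := by linarith
  have hR0 : (0 : ℤ) ≤ R := by linarith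
  have hTH0 : (0 : ℤ) ≤ TH := by linarith
  have hGle2 : G ≤ 2 * TH * mm - mm := by linarith
  have hb0 : (0 : ℤ) ≤ 2 * R + 1 := by linarith
  have step1 : G * (2 * R + 1) ≤ (2 * TH * mm - mm) * (2 * R + 1) :=
    mul_le_mul_of_nonneg_right hGle2 hb0
  have e1 : (2 * TH * mm - mm) * (2 * R + 1)
      = 4 * (TH * R * mm) + 2 * (TH * mm) - 2 * (R * mm) - mm := by ring
  have c1 : 2 * (TH * mm) ≤ 2 * (TH * R * mm) := by
    have h : TH * mm * 1 ≤ TH * mm * R := by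
      apply mul_le_mul_of_nonneg_left hrr
      positivity
    nlinarith
  have c2 : 2 * NN ≤ 2 * (R * mm) := by
    have h : mm * 1 ≤ mm * R := mul_le_mul_of_nonneg_left hrr hmm0
    nlinarith
  have c3 : 2 * R ≤ 2 * (R * mm) := by
    have h : R * 1 ≤ R * mm := mul_le_mul_of_nonneg_left hm2 hR0
    nlinarith
  have c4 : 4 * (R * mm) ≤ 2 * (TH * R * mm) := by
    have h : 2 * (R * mm) ≤ TH * (R * mm) := by
      apply mul_le_mul_of_nonneg_right hθ2
      positivity
    nlinarith
  have c5 : 8 * (TH * R * mm) ≤ 8 * (Dd * (TH * R * mm)) := by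
    have h : 1 * (TH * R * mm) ≤ Dd * (TH * R * mm) := by
      apply mul_le_mul_of_nonneg_right hd
      positivity
    nlinarith
  nlinarith [step1, e1, c1, c2, c3, c4, c5]

lemma W_bound {M : Sandpile d} (hθ2 : 2 ≤ M.θ) {r n G W : ℕ} (hrr : 1 ≤ r)
    (hn : 1 ≤ n) (hd : 1 ≤ d)
    (hGle : G ≤ (2 * M.θ - 1) * n ^ d)
    (hW : W = 2 * n + 2 * r + G * (2 * r + 1)) :
    W ≤ 8 * d * M.θ * r * n ^ d := by
  have hm1 : n ≤ n ^ d := Nat.le_self_pow (by omega) n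
  have hm2 : 1 ≤ n ^ d := le_trans hn hm1
  have hGsum : G + n ^ d ≤ 2 * M.θ * n ^ d := by
    have h2 : 1 * n ^ d ≤ 2 * M.θ * n ^ d := Nat.mul_le_mul_right _ (by omega)
    have h1 : (2 * M.θ - 1) * n ^ d + n ^ d = 2 * M.θ * n ^ d := by
      rw [Nat.sub_mul, Nat.one_mul]
      omega
    omega
  rw [hW]
  zify
  zify at hGsum
  have := W_bound_int (M.θ : ℤ) (r : ℤ) (n : ℤ) (d : ℤ) ((n : ℤ) ^ d) (G : ℤ)
    (by exact_mod_cast hθ2) (by exact_mod_cast hrr) (by exact_mod_cast hn)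
    (by exact_mod_cast hd) (by exact_mod_cast hm1) (by exact_mod_cast hm2)
    (by exact_mod_cast hGsum) (by positivity)
  push_cast
  linarith

theorem main_result {d : ℕ} (hd : 1 ≤ d) (M : Sandpile d)
    (hcomp : M.Complete) (r : ℕ) (hr : M.IsRadius r) (n : ℕ)
    (c : (Fin d → ℤ) → ℕ) (hcube : InCube n c) (hbound : ∀ x, c x < 2 * M.θ) :
    {x : Fin d → ℤ | ∃ s, M.θ ≤ M.F^[s] c x}.Finite ∧
      {x : Fin d → ℤ | ∃ s, M.θ ≤ M.F^[s] c x}.ncard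
        ≤ (8 * d * M.θ * r * n ^ d) ^ d := by
  classical
  set T : Set (Fin d → ℤ) := {x | ∃ s, M.θ ≤ M.F^[s] c x} with hT
  by_cases hTe : T = ∅
  · rw [hTe]
    exact ⟨Set.finite_empty, by simp⟩
  · have hTne : T.Nonempty := Set.nonempty_iff_ne_empty.mpr hTe
    obtain ⟨x₁, hx₁⟩ := hTne
    have hx₁' : ∃ s, M.θ ≤ M.F^[s] c x₁ := hx₁
    obtain ⟨s₁, hs₁⟩ := hx₁'
    have hex : ∃ s x, M.θ ≤ (M.F^[s] c) x := ⟨s₁, x₁, hs₁⟩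
    have hr1 := hr.1
    have hn : 1 ≤ n := n_pos hd hcube hex
    have hrr : 1 ≤ r := r_pos hr
    have hθ2 : 2 ≤ M.θ := theta_two hd hcomp
    set G : ℕ := ∑ z ∈ box r n 0, c z with hG
    have hGle : G ≤ (2 * M.θ - 1) * n ^ d := G_le hbound
    set W : ℕ := 2 * n + 2 * r + G * (2 * r + 1) with hW
    have hpair : ∀ i : Fin d, ∀ x ∈ T, ∀ x' ∈ T, x i - x' i ≤ (W : ℤ) - 2 := by
      intro i x hx x' hx'
      have hpb := pair_bound hcube hr1 hcomp hn i hx hx'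
      have hcast : (W : ℤ) = 2 * (n : ℤ) + 2 * r + (G : ℤ) * (2 * r + 1) := by
        rw [hW]
        push_cast
        ring
      linarith
    have hlow : ∀ i : Fin d, ∃ m : ℤ, (∃ x ∈ T, x i = m) ∧ ∀ x ∈ T, m ≤ x i := by
      intro i
      have hbdd : ∃ bd : ℤ, ∀ z : ℤ, (∃ x ∈ T, x i = z) → bd ≤ z := by
        refine ⟨x₁ i - ((W : ℤ) - 2), ?_⟩
        rintro z ⟨x, hxT, rfl⟩
        have := hpair i x₁ hx₁ x hxT
        linarith
      have hinh : ∃ z : ℤ, ∃ x ∈ T, x i = z := ⟨x₁ i, x₁, hx₁, rfl⟩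
      obtain ⟨lb, hlb1, hlb2⟩ := Int.exists_least_of_bdd hbdd hinh
      exact ⟨lb, hlb1, fun x hx => hlb2 (x i) ⟨x, hx, rfl⟩⟩
    choose mv hmv1 hmv2 using hlow
    have hsub : T ⊆ ↑(Finset.Icc mv (fun i => mv i + ((W : ℤ) - 1))) := by
      intro x hxT
      rw [Finset.coe_Icc, Set.mem_Icc]
      constructor
      · intro i
        exact hmv2 i x hxT
      · intro i
        obtain ⟨x₀, hx₀T, hx₀i⟩ := hmv1 i
        have hpb := hpair i x hxT x₀ hx₀T
        rw [hx₀i] at hpb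
        show x i ≤ mv i + ((W : ℤ) - 1)
        linarith
    have hcardIcc : (Finset.Icc mv (fun i => mv i + ((W : ℤ) - 1))).card = W ^ d := by
      rw [Pi.card_Icc]
      have hcard1 : ∀ i : Fin d,
          (Finset.Icc (mv i) (mv i + ((W : ℤ) - 1))).card = W := by
        intro i
        rw [Int.card_Icc]
        omega
      calc (∏ i : Fin d, (Finset.Icc (mv i) (mv i + ((W : ℤ) - 1))).card)
          = ∏ _i : Fin d, W := Finset.prod_congr rfl (fun i _ => hcard1 i)
      _ = W ^ d := by rw [Finset.prod_const, Finset.card_univ, Fintype.card_fin]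
    have hWb : W ≤ 8 * d * M.θ * r * n ^ d := W_bound hθ2 hrr hn hd hGle hW
    constructor
    · exact Set.Finite.subset (Finset.finite_toSet _) hsub
    · calc T.ncard ≤ (↑(Finset.Icc mv (fun i => mv i + ((W : ℤ) - 1))) :
            Set (Fin d → ℤ)).ncard :=
          Set.ncard_le_ncard hsub (Finset.finite_toSet _)
      _ = (Finset.Icc mv (fun i => mv i + ((W : ℤ) - 1))).card :=
          Set.ncard_coe_finset _
      _ = W ^ d := hcardIcc
      _ ≤ (8 * d * M.θ * r * n ^ d) ^ d := Nat.pow_le_pow_left hWb d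

end SandpileBound

/-- for a complete neighborhood of radius `r` and a
configuration `c` within the elementary hypercube of side `n` with all cells
below `2θ`, the set of cells that topple at some time during the parallel
evolution is finite, of cardinality at most `(8·d·θ·r·n^d)^d`. -/
theorem sandpile_toppled_cells_card_bound {d : ℕ} (hd : 1 ≤ d) (M : Sandpile d)
    (hcomp : M.Complete) (r : ℕ) (hr : M.IsRadius r) (n : ℕ)
    (c : (Fin d → ℤ) → ℕ) (hcube : InCube n c) (hbound : ∀ x, c x < 2 * M.θ) :
    {x : Fin d → ℤ | ∃ s, M.θ ≤ M.F^[s] c x}.Finite ∧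
      {x : Fin d → ℤ | ∃ s, M.θ ≤ M.F^[s] c x}.ncard
        ≤ (8 * d * M.θ * r * n ^ d) ^ d :=
  SandpileBound.main_result hd M hcomp r hr n c hcube hbound
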